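/- arXiv:1006.3823 — 3 statements merged into one kernel-verified Lean document; each statement's English description precedes it below -/
import Mathlib

section
/- Let m ≥ 1 and let λ_1 > λ_2 > ⋯ > λ_m ≥ 1 be integers (a partition with distinct parts). Then, as an identity of rational numbers, ∑_{i=1}^m λ_i²(λ_i−1) ∏_{j≠i} ((λ_i−λ_j−1)(λ_i+λ_j)) / ((λ_i−λ_j)(λ_i+λ_j−1)) = ∑_{i=1}^m λ_i²(λ_i−1) − ∑_{i≠j} λ_i λ_j, where the last sum is over ordered pairs (i,j) with i ≠ j. (All denominators are nonzero: the λ_i are pairwise distinct and λ_i+λ_j ≥ 3 for i ≠ j.) -/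
open Finset Polynomial

section Aux

variable {ι : Type*}

/-- second-from-top coefficient of `∏ (X - C (r i))`. -/
lemma coeff_prod_X_sub_C_card_sub_two (s : Finset ι) (r : ι → ℚ) (hs : 2 ≤ s.card) :
    (∏ i ∈ s, (X - C (r i))).coeff (s.card - 2)
      = ((∑ i ∈ s, r i) ^ 2 - ∑ i ∈ s, (r i) ^ 2) / 2 := by
  induction s using Finset.cons_induction with
  | empty => simp at hs
  | cons a s ha ih =>
    rw [Finset.prod_cons, Finset.sum_cons, Finset.sum_cons, Finset.card_cons]
    rcases Nat.lt_or_ge s.card 2 with hlt | hge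
    · -- s.card = 1
      have hs' : 2 ≤ s.card + 1 := by rwa [Finset.card_cons] at hs
      have hcard : s.card = 1 := by omega
      obtain ⟨b, rfl⟩ := Finset.card_eq_one.mp hcard
      simp only [Finset.prod_singleton, Finset.sum_singleton, Finset.card_singleton]
      have : ((X - C (r a)) * (X - C (r b))).coeff (1 + 1 - 2)
          = (X - C (r a)).coeff 0 * (X - C (r b)).coeff 0 := by
        simpa using Polynomial.mul_coeff_zero (X - C (r a)) (X - C (r b))
      rw [this]
      simp only [Polynomial.coeff_sub, Polynomial.coeff_X_zero, Polynomial.coeff_C_zero]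
      ring
    · obtain ⟨k, hk⟩ : ∃ k, s.card = k + 2 := ⟨s.card - 2, by omega⟩
      have hIH := ih hge
      have htop : (∏ i ∈ s, (X - C (r i))).coeff (s.card - 1) = -∑ i ∈ s, r i :=
        Polynomial.prod_X_sub_C_coeff_card_pred s r (by omega)
      have hstep : ((X - C (r a)) * ∏ i ∈ s, (X - C (r i))).coeff (s.card + 1 - 2)
          = (∏ i ∈ s, (X - C (r i))).coeff (s.card - 2)
            - r a * (∏ i ∈ s, (X - C (r i))).coeff (s.card - 1) := by
        rw [hk]
        have : k + 2 + 1 - 2 = k + 1 := by omega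
        rw [this]
        rw [sub_mul, Polynomial.coeff_sub, Polynomial.coeff_X_mul]
        have h2 : k + 2 - 2 = k := by omega
        have h1 : k + 2 - 1 = k + 1 := by omega
        rw [h2, h1, Polynomial.coeff_C_mul]
      rw [hstep, hIH, htop]
      ring

end Aux

/-- Main identity with rational parameters. -/
lemma main_identity (m : ℕ) (hm : 1 ≤ m) (u : Fin m → ℚ)
    (hne : ∀ i j : Fin m, i ≠ j → u i ≠ u j)
    (h1 : ∀ i, 1 ≤ u i) :
    ∑ i : Fin m, (u i ^ 2 * (u i - 1)) *
        ∏ j ∈ Finset.univ.erase i,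
          ((u i - u j - 1) * (u i + u j)) / ((u i - u j) * (u i + u j - 1))
      = ∑ i : Fin m, u i ^ 2 * (u i - 1) -
          ∑ i : Fin m, ∑ j ∈ Finset.univ.erase i, u i * u j := by
  classical
  set μ : Fin m → ℚ := fun i => u i ^ 2 - u i with hμdef
  set τ : Fin m → ℚ := fun i => u i ^ 2 + u i with hτdef
  set L : ℚ := ∑ i, u i with hLdef
  set Pμ : ℚ[X] := ∏ i : Fin m, (X - C (μ i)) with hPμdef
  set Pτ : ℚ[X] := ∏ i : Fin m, (X - C (τ i)) with hPτdef
  set S0 : ℚ[X] := C (1/2) * X * (Pμ - Pτ) - C L * Pμ with hS0def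
  set S : ℚ[X] := S0.comp (X ^ 2 - X) with hSdef
  set v : Fin m ⊕ Fin m → ℚ := Sum.elim u (fun i => 1 - u i) with hvdef
  -- numeric facts
  have husum : ∀ i j : Fin m, u i + u j - 1 ≠ 0 := by
    intro i j
    have := h1 i; have := h1 j
    intro h; linarith
  have h2u : ∀ i : Fin m, (2 : ℚ) * u i - 1 ≠ 0 := by
    intro i; have := h1 i; intro h; linarith
  have hcardm : (univ : Finset (Fin m)).card = m := by simp
  have hcard2 : (univ : Finset (Fin m ⊕ Fin m)).card = 2 * m := by
    simp [Finset.card_univ]; ring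
  -- degree facts
  have hPμmonic : Pμ.Monic := monic_prod_of_monic _ _ fun i _ => monic_X_sub_C _
  have hPτmonic : Pτ.Monic := monic_prod_of_monic _ _ fun i _ => monic_X_sub_C _
  have hPμdeg : Pμ.natDegree = m := by
    rw [hPμdef, natDegree_prod_of_monic _ _ fun i _ => monic_X_sub_C _]
    simp
  have hPτdeg : Pτ.natDegree = m := by
    rw [hPτdef, natDegree_prod_of_monic _ _ fun i _ => monic_X_sub_C _]
    simp
  have hPμ1 : Pμ.coeff (m - 1) = -∑ i, μ i := by
    have h := Polynomial.prod_X_sub_C_coeff_card_pred (univ : Finset (Fin m)) μ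
      (by rw [hcardm]; omega)
    rwa [hcardm] at h
  have hPτ1 : Pτ.coeff (m - 1) = -∑ i, τ i := by
    have h := Polynomial.prod_X_sub_C_coeff_card_pred (univ : Finset (Fin m)) τ
      (by rw [hcardm]; omega)
    rwa [hcardm] at h
  have hτμ : ∑ i, τ i - ∑ i, μ i = 2 * L := by
    rw [← Finset.sum_sub_distrib, hLdef, Finset.mul_sum]
    apply Finset.sum_congr rfl
    intro i _
    simp only [hμdef, hτdef]
    ring
  have hdiff1 : (Pμ - Pτ).coeff (m - 1) = 2 * L := by
    rw [coeff_sub, hPμ1, hPτ1]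
    linarith
  have hdiffcoeff : ∀ k, m ≤ k → (Pμ - Pτ).coeff k = 0 := by
    intro k hk
    rcases eq_or_lt_of_le hk with rfl | hk'
    · rw [coeff_sub, ← hPμdeg, hPμmonic.coeff_natDegree, hPμdeg, ← hPτdeg,
        hPτmonic.coeff_natDegree, sub_self]
    · rw [coeff_sub, coeff_eq_zero_of_natDegree_lt (by omega : Pμ.natDegree < k),
        coeff_eq_zero_of_natDegree_lt (by omega : Pτ.natDegree < k), sub_self]
  have hS0coeff0 : ∀ k, m ≤ k → S0.coeff k = 0 := by
    intro k hk
    obtain ⟨k', rfl⟩ : ∃ k', k = k' + 1 := ⟨k - 1, by omega⟩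
    rw [hS0def, coeff_sub, mul_assoc, coeff_C_mul, coeff_X_mul, coeff_C_mul]
    rcases eq_or_lt_of_le hk with hk1 | hk2
    · -- m = k' + 1
      have hk' : k' = m - 1 := by omega
      rw [hk', hdiff1]
      have hmm : m - 1 + 1 = m := by omega
      rw [hmm, ← hPμdeg, hPμmonic.coeff_natDegree]
      ring
    · rw [hdiffcoeff k' (by omega),
        coeff_eq_zero_of_natDegree_lt (by omega : Pμ.natDegree < k' + 1)]
      ring
  have hS0deglt : S0.degree < (m : ℕ) := (degree_lt_iff_coeff_zero S0 m).mpr hS0coeff0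
  have hS0nat : S0.natDegree < m := by
    rcases eq_or_ne S0 0 with h | h
    · rw [h, natDegree_zero]; omega
    · exact (natDegree_lt_iff_degree_lt h).mpr (by exact_mod_cast hS0deglt)
  have hSsum : S = ∑ k ∈ range m, C (S0.coeff k) * (X ^ 2 - X) ^ k := by
    rw [hSdef, comp_eq_sum_left]
    exact sum_over_range' _ (by simp) _ hS0nat
  have hqmonic : ((X : ℚ[X]) ^ 2 - X).Monic := by
    apply monic_X_pow_sub
    rw [degree_X]
    exact_mod_cast one_lt_two
  have hqnat : ((X : ℚ[X]) ^ 2 - X).natDegree = 2 := by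
    have hd : ((X : ℚ[X]) ^ 2 - X).degree = 2 := by
      rw [degree_sub_eq_left_of_degree_lt]
      · exact degree_X_pow 2
      · rw [degree_X, degree_X_pow]
        exact_mod_cast one_lt_two
    exact natDegree_eq_of_degree_eq_some hd
  have hqpow : ∀ k, (((X : ℚ[X]) ^ 2 - X) ^ k).natDegree = 2 * k := by
    intro k; rw [natDegree_pow, hqnat]; ring
  have hScoeffhigh : ∀ j, 2 * m - 1 ≤ j → S.coeff j = 0 := by
    intro j hj
    rw [hSsum, finset_sum_coeff]
    apply Finset.sum_eq_zero
    intro k hk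
    rw [Finset.mem_range] at hk
    have hz : (((X : ℚ[X]) ^ 2 - X) ^ k).coeff j = 0 :=
      coeff_eq_zero_of_natDegree_lt (by rw [hqpow]; omega)
    rw [coeff_C_mul, hz, mul_zero]
  have hScoefftop : S.coeff (2 * m - 2) = S0.coeff (m - 1) := by
    rw [hSsum, finset_sum_coeff]
    rw [Finset.sum_eq_single (m - 1)]
    · have hnd : (((X : ℚ[X]) ^ 2 - X) ^ (m - 1)).natDegree = 2 * m - 2 := by
        rw [hqpow]; omega
      rw [coeff_C_mul, ← hnd, (hqmonic.pow _).coeff_natDegree, mul_one]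
    · intro k hk hkne
      rw [Finset.mem_range] at hk
      have hz : (((X : ℚ[X]) ^ 2 - X) ^ k).coeff (2 * m - 2) = 0 :=
        coeff_eq_zero_of_natDegree_lt (by rw [hqpow]; omega)
      rw [coeff_C_mul, hz, mul_zero]
    · intro h
      exact absurd (Finset.mem_range.mpr (by omega)) h
  have hXS : (X * S).coeff (2 * m - 1) = S.coeff (2 * m - 2) := by
    have h21 : 2 * m - 1 = (2 * m - 2) + 1 := by omega
    rw [h21, coeff_X_mul]
  -- injectivity of nodes
  have hvinj : Set.InjOn v (univ : Finset (Fin m ⊕ Fin m)) := by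
    intro a _ b _ hab
    match a, b with
    | Sum.inl i, Sum.inl j =>
      simp only [hvdef, Sum.elim_inl] at hab
      by_contra h
      exact hne i j (by simpa using h) hab
    | Sum.inl i, Sum.inr j =>
      simp only [hvdef, Sum.elim_inl, Sum.elim_inr] at hab
      have := h1 i; have := h1 j; exfalso; linarith
    | Sum.inr i, Sum.inl j =>
      simp only [hvdef, Sum.elim_inl, Sum.elim_inr] at hab
      have := h1 i; have := h1 j; exfalso; linarith
    | Sum.inr i, Sum.inr j =>
      simp only [hvdef, Sum.elim_inr] at hab
      have : u i = u j := by linarith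
      by_contra h
      exact hne i j (by simpa using h) this
  have hdegXS' : ∀ k, 2 * m ≤ k → (X * S).coeff k = 0 := by
    intro k hk
    obtain ⟨k', rfl⟩ : ∃ k', k = k' + 1 := ⟨k - 1, by omega⟩
    rw [coeff_X_mul]
    exact hScoeffhigh k' (by omega)
  have hdegXS : (X * S).degree < (((univ : Finset (Fin m ⊕ Fin m)).card : ℕ) : WithBot ℕ) := by
    rw [hcard2]
    exact (degree_lt_iff_coeff_zero _ _).mpr hdegXS'
  have hint := Lagrange.eq_interpolate hvinj hdegXS
  have hco : (X * S).coeff (2 * m - 1)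
      = ∑ k : Fin m ⊕ Fin m, eval (v k) (X * S) * ∏ l ∈ univ.erase k, (v k - v l)⁻¹ := by
    conv_lhs => rw [hint]
    rw [Lagrange.interpolate_apply, finset_sum_coeff]
    apply Finset.sum_congr rfl
    intro k _
    rw [coeff_C_mul]
    congr 1
    have hnd : (Lagrange.basis univ v k).natDegree = 2 * m - 1 := by
      rw [Lagrange.natDegree_basis hvinj (mem_univ k), hcard2]
    rw [← hnd, coeff_natDegree]
    rw [Lagrange.basis, leadingCoeff_prod]
    apply Finset.prod_congr rfl
    intro l _
    rw [Lagrange.basisDivisor, leadingCoeff_mul, leadingCoeff_C,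
      (monic_X_sub_C (v l)).leadingCoeff, mul_one]
  -- erase decompositions
  have herase_inl : ∀ (i : Fin m) (g : Fin m ⊕ Fin m → ℚ),
      ∏ l ∈ univ.erase (Sum.inl i), g l
        = (∏ j ∈ univ.erase i, g (Sum.inl j)) * ∏ j : Fin m, g (Sum.inr j) := by
    intro i g
    have hset : (univ : Finset (Fin m ⊕ Fin m)).erase (Sum.inl i)
        = (univ.erase i).disjSum univ := by
      ext x
      cases x with
      | inl a => simp
      | inr b => simp
    rw [hset, Finset.prod_disjSum]
  have herase_inr : ∀ (i : Fin m) (g : Fin m ⊕ Fin m → ℚ),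
      ∏ l ∈ univ.erase (Sum.inr i), g l
        = (∏ j : Fin m, g (Sum.inl j)) * ∏ j ∈ univ.erase i, g (Sum.inr j) := by
    intro i g
    have hset : (univ : Finset (Fin m ⊕ Fin m)).erase (Sum.inr i)
        = (univ : Finset (Fin m)).disjSum (univ.erase i) := by
      ext x
      cases x with
      | inl a => simp
      | inr b => simp
    rw [hset, Finset.prod_disjSum]
  -- evaluation of S0 at μ i
  have hS0evalμ : ∀ i : Fin m,
      S0.eval (μ i) = u i * μ i * ∏ j ∈ univ.erase i, (μ i - τ j) := by
    intro i
    have hPμeval : Pμ.eval (μ i) = 0 := by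
      rw [hPμdef, eval_prod]
      apply Finset.prod_eq_zero (mem_univ i)
      simp
    have hPτeval : Pτ.eval (μ i) = (μ i - τ i) * ∏ j ∈ univ.erase i, (μ i - τ j) := by
      rw [hPτdef, eval_prod]
      simp only [eval_sub, eval_X, eval_C]
      exact (Finset.mul_prod_erase univ _ (mem_univ i)).symm
    have hμτ : μ i - τ i = -(2 * u i) := by
      simp only [hμdef, hτdef]; ring
    rw [hS0def]
    simp only [eval_sub, eval_mul, eval_C, eval_X]
    rw [hPμeval, hPτeval, hμτ]
    ring
  -- per-node terms
  have hTinl : ∀ i : Fin m,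
      eval (v (Sum.inl i)) (X * S) * ∏ l ∈ univ.erase (Sum.inl i), (v (Sum.inl i) - v l)⁻¹
        = (u i ^ 2 * (u i ^ 2 - u i) * (2 * u i - 1)⁻¹) *
          ∏ j ∈ univ.erase i,
            ((u i - u j - 1) * (u i + u j)) / ((u i - u j) * (u i + u j - 1)) := by
    intro i
    have hv1 : v (Sum.inl i) = u i := rfl
    have hSeval : eval (u i) S = S0.eval (μ i) := by
      rw [hSdef, eval_comp]
      simp only [eval_sub, eval_pow, eval_X]
      rfl
    rw [hv1, eval_mul, eval_X, hSeval, hS0evalμ i,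
      herase_inl i (fun l => (u i - v l)⁻¹)]
    simp only [hvdef, Sum.elim_inl, Sum.elim_inr]
    rw [← Finset.mul_prod_erase univ (fun j => (u i - (1 - u j))⁻¹) (mem_univ i)]
    have hfactor : ∀ j ∈ univ.erase i,
        (μ i - τ j) * ((u i - u j)⁻¹ * (u i - (1 - u j))⁻¹)
          = ((u i - u j - 1) * (u i + u j)) / ((u i - u j) * (u i + u j - 1)) := by
      intro j hj
      have hji : j ≠ i := (Finset.mem_erase.mp hj).1
      have hb : u i - u j ≠ 0 := sub_ne_zero.mpr (hne i j (Ne.symm hji))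
      have hc : u i - (1 - u j) ≠ 0 := by
        have : u i - (1 - u j) = u i + u j - 1 := by ring
        rw [this]; exact husum i j
      have hc' : u i + u j - 1 ≠ 0 := husum i j
      field_simp
      ring
    have hmerge : (∏ j ∈ univ.erase i, (μ i - τ j)) *
        ((∏ j ∈ univ.erase i, (u i - u j)⁻¹) * (∏ j ∈ univ.erase i, (u i - (1 - u j))⁻¹))
        = ∏ j ∈ univ.erase i,
            ((u i - u j - 1) * (u i + u j)) / ((u i - u j) * (u i + u j - 1)) := by
      rw [← Finset.prod_mul_distrib, ← Finset.prod_mul_distrib]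
      exact Finset.prod_congr rfl hfactor
    rw [← hmerge]
    have h2 : u i - (1 - u i) = 2 * u i - 1 := by ring
    rw [h2]
    simp only [hμdef]
    ring
  have hTinr : ∀ i : Fin m,
      eval (v (Sum.inr i)) (X * S) * ∏ l ∈ univ.erase (Sum.inr i), (v (Sum.inr i) - v l)⁻¹
        = ((1 - u i) * (u i * (u i ^ 2 - u i)) * (1 - 2 * u i)⁻¹) *
          ∏ j ∈ univ.erase i,
            ((u i - u j - 1) * (u i + u j)) / ((u i - u j) * (u i + u j - 1)) := by
    intro i
    have hv1 : v (Sum.inr i) = 1 - u i := rfl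
    have hSeval : eval (1 - u i) S = S0.eval (μ i) := by
      rw [hSdef, eval_comp]
      simp only [eval_sub, eval_pow, eval_X]
      have : (1 - u i) ^ 2 - (1 - u i) = μ i := by simp only [hμdef]; ring
      rw [this]
    rw [hv1, eval_mul, eval_X, hSeval, hS0evalμ i,
      herase_inr i (fun l => ((1 - u i) - v l)⁻¹)]
    simp only [hvdef, Sum.elim_inl, Sum.elim_inr]
    rw [← Finset.mul_prod_erase univ (fun j => ((1 - u i) - u j)⁻¹) (mem_univ i)]
    have hfactor : ∀ j ∈ univ.erase i,
        (μ i - τ j) * (((1 - u i) - u j)⁻¹ * ((1 - u i) - (1 - u j))⁻¹)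
          = ((u i - u j - 1) * (u i + u j)) / ((u i - u j) * (u i + u j - 1)) := by
      intro j hj
      have hinv : ((1 - u i) - u j)⁻¹ * ((1 - u i) - (1 - u j))⁻¹
          = (u i - u j)⁻¹ * (u i + u j - 1)⁻¹ := by
        rw [← mul_inv, ← mul_inv]
        congr 1
        ring
      rw [hinv, div_eq_mul_inv, mul_inv]
      have hnum : μ i - τ j = (u i - u j - 1) * (u i + u j) := by
        simp only [hμdef, hτdef]; ring
      rw [hnum]
    have hmerge : (∏ j ∈ univ.erase i, (μ i - τ j)) *
        ((∏ j ∈ univ.erase i, ((1 - u i) - u j)⁻¹) *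
          (∏ j ∈ univ.erase i, ((1 - u i) - (1 - u j))⁻¹))
        = ∏ j ∈ univ.erase i,
            ((u i - u j - 1) * (u i + u j)) / ((u i - u j) * (u i + u j - 1)) := by
      rw [← Finset.prod_mul_distrib, ← Finset.prod_mul_distrib]
      exact Finset.prod_congr rfl hfactor
    rw [← hmerge]
    have h2 : (1 - u i) - u i = 1 - 2 * u i := by ring
    rw [h2]
    simp only [hμdef]
    ring
  -- value of the key coefficient
  have hDsum : ∑ i : Fin m, ∑ j ∈ univ.erase i, u i * u j
      = (∑ i, u i) * (∑ i, u i) - ∑ i, u i ^ 2 := by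
    have hinner : ∀ i : Fin m, ∑ j ∈ univ.erase i, u i * u j
        = u i * (∑ j, u j) - u i * u i := by
      intro i
      rw [← Finset.mul_sum, Finset.sum_erase_eq_sub (mem_univ i), mul_sub]
    rw [Finset.sum_congr rfl (fun i _ => hinner i), Finset.sum_sub_distrib, ← Finset.sum_mul]
    congr 1
    apply Finset.sum_congr rfl
    intro i _
    ring
  have hcube : ∑ i : Fin m, u i ^ 2 * (u i - 1) = (∑ i, u i ^ 3) - ∑ i, u i ^ 2 := by
    rw [← Finset.sum_sub_distrib]
    apply Finset.sum_congr rfl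
    intro i _
    ring
  have hval : S0.coeff (m - 1)
      = (∑ i : Fin m, u i ^ 2 * (u i - 1)) - ∑ i : Fin m, ∑ j ∈ univ.erase i, u i * u j := by
    rcases eq_or_lt_of_le hm with hm1 | hm2
    · -- m = 1
      subst hm1
      have hPμ0 : Pμ = X - C (μ 0) := by rw [hPμdef]; exact Fin.prod_univ_one _
      have h00 : (C (1/2 : ℚ) * X * (Pμ - Pτ)).coeff 0 = 0 := by
        rw [mul_coeff_zero, mul_coeff_zero, coeff_X_zero, mul_zero, zero_mul]
      have herased : ∀ i : Fin 1, (univ : Finset (Fin 1)).erase i = ∅ := by decide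
      have h10 : (1:ℕ) - 1 = 0 := rfl
      rw [h10, hS0def, coeff_sub, h00, coeff_C_mul, hPμ0, coeff_sub, coeff_X_zero, coeff_C_zero]
      simp only [herased, Finset.sum_empty, Finset.sum_const_zero, hLdef, hμdef]
      rw [Fin.sum_univ_one, Fin.sum_univ_one]
      ring
    · -- 2 ≤ m
      obtain ⟨k, rfl⟩ : ∃ k, m = k + 2 := ⟨m - 2, by omega⟩
      have hcoeffPμk : Pμ.coeff k = ((∑ i, μ i) ^ 2 - ∑ i, (μ i) ^ 2) / 2 := by
        have h := coeff_prod_X_sub_C_card_sub_two (univ : Finset (Fin (k+2))) μ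
          (by rw [hcardm]; omega)
        rw [hcardm] at h
        simpa using h
      have hcoeffPτk : Pτ.coeff k = ((∑ i, τ i) ^ 2 - ∑ i, (τ i) ^ 2) / 2 := by
        have h := coeff_prod_X_sub_C_card_sub_two (univ : Finset (Fin (k+2))) τ
          (by rw [hcardm]; omega)
        rw [hcardm] at h
        simpa using h
      have hcoeffPμtop : Pμ.coeff (k + 1) = -∑ i, μ i := by
        have h := hPμ1
        rwa [show k + 2 - 1 = k + 1 by omega] at h
      have e1 : S0.coeff (k + 1) = 1/2 * ((Pμ.coeff k) - (Pτ.coeff k)) - L * Pμ.coeff (k+1) := by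
        rw [hS0def, coeff_sub, mul_assoc, coeff_C_mul, coeff_X_mul, coeff_C_mul, coeff_sub]
      have hμsum : ∑ i, μ i = (∑ i, u i ^ 2) - (∑ i, u i) := by
        rw [← Finset.sum_sub_distrib]
      have hτsum : ∑ i, τ i = (∑ i, u i ^ 2) + (∑ i, u i) := by
        rw [← Finset.sum_add_distrib]
      have hμ2sum : ∑ i, (μ i) ^ 2
          = ((∑ i, u i ^ 4) - 2 * (∑ i, u i ^ 3)) + (∑ i, u i ^ 2) := by
        have hterm : ∀ i : Fin (k+2), (μ i) ^ 2 = (u i ^ 4 - 2 * u i ^ 3) + u i ^ 2 := by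
          intro i; simp only [hμdef]; ring
        rw [Finset.sum_congr rfl fun i _ => hterm i, Finset.sum_add_distrib,
          Finset.sum_sub_distrib, ← Finset.mul_sum]
      have hτ2sum : ∑ i, (τ i) ^ 2
          = ((∑ i, u i ^ 4) + 2 * (∑ i, u i ^ 3)) + (∑ i, u i ^ 2) := by
        have hterm : ∀ i : Fin (k+2), (τ i) ^ 2 = (u i ^ 4 + 2 * u i ^ 3) + u i ^ 2 := by
          intro i; simp only [hτdef]; ring
        rw [Finset.sum_congr rfl fun i _ => hterm i, Finset.sum_add_distrib,
          Finset.sum_add_distrib, ← Finset.mul_sum]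
      rw [show k + 2 - 1 = k + 1 by omega, e1, hcoeffPμk, hcoeffPτk, hcoeffPμtop,
        hμsum, hτsum, hμ2sum, hτ2sum, hcube, hDsum, hLdef]
      ring
  -- pairing the two node families
  have hpair : ∀ i : Fin m,
      (eval (v (Sum.inl i)) (X * S) * ∏ l ∈ univ.erase (Sum.inl i), (v (Sum.inl i) - v l)⁻¹)
        + (eval (v (Sum.inr i)) (X * S) * ∏ l ∈ univ.erase (Sum.inr i), (v (Sum.inr i) - v l)⁻¹)
      = (u i ^ 2 * (u i - 1)) * ∏ j ∈ univ.erase i,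
            ((u i - u j - 1) * (u i + u j)) / ((u i - u j) * (u i + u j - 1)) := by
    intro i
    rw [hTinl i, hTinr i, ← add_mul]
    congr 1
    have h2 := h2u i
    have h2' : (1 : ℚ) - 2 * u i ≠ 0 := by intro h; apply h2; linarith
    rw [show (1 : ℚ) - 2 * u i = -(2 * u i - 1) by ring, inv_neg]
    have key : u i ^ 2 * (u i - 1) = u i ^ 2 * (u i - 1) * (2 * u i - 1) * (2 * u i - 1)⁻¹ := by
      rw [mul_assoc _ (2 * u i - 1), mul_inv_cancel₀ h2, mul_one]
    rw [key]
    ring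
  have hsum2 : ∑ k : Fin m ⊕ Fin m, eval (v k) (X * S) * ∏ l ∈ univ.erase k, (v k - v l)⁻¹
      = ∑ i : Fin m, (u i ^ 2 * (u i - 1)) * ∏ j ∈ univ.erase i,
          ((u i - u j - 1) * (u i + u j)) / ((u i - u j) * (u i + u j - 1)) := by
    rw [Fintype.sum_sum_type, ← Finset.sum_add_distrib]
    exact Finset.sum_congr rfl fun i _ => hpair i
  rw [← hsum2, ← hco, hXS, hScoefftop, hval]

/-- Identity (3.14) in the paper: for a partition `λ₁ > λ₂ > ⋯ > λₘ ≥ 1` with distinct parts,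
`∑ᵢ λᵢ²(λᵢ−1) ∏_{j≠i} ((λᵢ−λⱼ−1)(λᵢ+λⱼ))/((λᵢ−λⱼ)(λᵢ+λⱼ−1))
  = ∑ᵢ λᵢ²(λᵢ−1) − ∑_{i≠j} λᵢλⱼ`. -/
theorem stmt_0 (m : ℕ) (hm : 1 ≤ m) (lam : Fin m → ℤ)
    (hdec : ∀ i j : Fin m, i < j → lam j < lam i)
    (hpos : ∀ i : Fin m, 1 ≤ lam i) :
    ∑ i : Fin m, ((lam i : ℚ) ^ 2 * ((lam i : ℚ) - 1)) *
        ∏ j ∈ Finset.univ.erase i,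
          (((lam i : ℚ) - (lam j : ℚ) - 1) * ((lam i : ℚ) + (lam j : ℚ))) /
            (((lam i : ℚ) - (lam j : ℚ)) * ((lam i : ℚ) + (lam j : ℚ) - 1))
      = ∑ i : Fin m, (lam i : ℚ) ^ 2 * ((lam i : ℚ) - 1) -
          ∑ i : Fin m, ∑ j ∈ Finset.univ.erase i, (lam i : ℚ) * (lam j : ℚ) := by
  apply main_identity m hm (fun i => (lam i : ℚ))
  · intro i j hij
    rcases lt_or_gt_of_ne hij with h | h
    · have := hdec i j h; intro hc; rw [Int.cast_inj] at hc; omega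
    · have := hdec j i h; intro hc; rw [Int.cast_inj] at hc; omega
  · intro i
    have := hpos i
    exact_mod_cast this
end

section
/- Let m ≥ 1 and let λ_1 > λ_2 > ⋯ > λ_m ≥ 1 be integers (a partition with distinct parts). For each i set A_i = 2λ_i ∏_{j≠i} ((λ_i−λ_j−1)(λ_i+λ_j)) / ((λ_i−λ_j)(λ_i+λ_j−1)). Then for every real number x with x ≠ λ_i and x ≠ 1−λ_i for all i, one has the partial fraction identity (x²−x) ∏_{i=1}^m ((x−λ_i−1)(x+λ_i)) / ((x−λ_i)(x+λ_i−1)) = (x²−x) − ∑_{i=1}^m A_i − ∑_{i=1}^m A_i λ_i(λ_i−1) / ((x−λ_i)(x+λ_i−1)). -/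
open Finset Polynomial


theorem lagrange_key (m : ℕ) (μ ν : Fin m → ℝ) (hμ : Function.Injective μ) (t : ℝ) :
    ∏ i : Fin m, (t - ν i) = ∏ i : Fin m, (t - μ i) +
      ∑ i : Fin m, (∏ j : Fin m, (μ i - ν j)) *
        ∏ j ∈ Finset.univ.erase i, ((μ i - μ j)⁻¹ * (t - μ j)) := by
  classical
  set P : ℝ[X] := (∏ i : Fin m, (X - C (ν i))) - ∏ i : Fin m, (X - C (μ i)) with hP
  have hmonic1 : (∏ i : Fin m, (X - C (ν i))).Monic := monic_prod_of_monic _ _ fun i _ => monic_X_sub_C _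
  have hmonic2 : (∏ i : Fin m, (X - C (μ i))).Monic := monic_prod_of_monic _ _ fun i _ => monic_X_sub_C _
  have hdeg1 : (∏ i : Fin m, (X - C (ν i))).degree = ((m : ℕ) : WithBot ℕ) := by
    simpa using degree_prod_of_monic (R := ℝ) Finset.univ _ (fun i _ => monic_X_sub_C (ν i))
  have hdeg2 : (∏ i : Fin m, (X - C (μ i))).degree = ((m : ℕ) : WithBot ℕ) := by
    simpa using degree_prod_of_monic (R := ℝ) Finset.univ _ (fun i _ => monic_X_sub_C (μ i))
  have hdegP : P.degree < (#(Finset.univ : Finset (Fin m)) : ℕ) := by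
    rw [Finset.card_univ, Fintype.card_fin]
    have := degree_sub_lt (hdeg1.trans hdeg2.symm) hmonic1.ne_zero
      (by rw [hmonic1.leadingCoeff, hmonic2.leadingCoeff])
    rw [hdeg1] at this
    exact this
  have h := Lagrange.eq_interpolate (v := μ) hμ.injOn hdegP
  have h2 := congrArg (Polynomial.eval t) h
  rw [Lagrange.interpolate_apply] at h2
  simp only [eval_finset_sum, eval_mul, eval_C, Lagrange.basis, eval_prod,
    Lagrange.basisDivisor, eval_mul, eval_C, eval_sub, eval_X, hP, eval_prod] at h2
  have hzero : ∀ i : Fin m, ∏ j : Fin m, (μ i - μ j) = 0 := fun i =>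
    Finset.prod_eq_zero (Finset.mem_univ i) (by ring)
  simp only [hzero, sub_zero] at h2
  linarith [h2]

/-- The partial fraction identity (3.15)-(3.16) in the paper: with
`Aᵢ = 2λᵢ ∏_{j≠i} ((λᵢ−λⱼ−1)(λᵢ+λⱼ))/((λᵢ−λⱼ)(λᵢ+λⱼ−1))`, for real `x` avoiding the poles,
`(x²−x) ∏ᵢ ((x−λᵢ−1)(x+λᵢ))/((x−λᵢ)(x+λᵢ−1))
  = (x²−x) − ∑ᵢ Aᵢ − ∑ᵢ Aᵢ λᵢ(λᵢ−1)/((x−λᵢ)(x+λᵢ−1))`. -/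
theorem stmt_1 (m : ℕ) (hm : 1 ≤ m) (lam : Fin m → ℤ)
    (hdec : ∀ i j : Fin m, i < j → lam j < lam i)
    (hpos : ∀ i : Fin m, 1 ≤ lam i)
    (A : Fin m → ℝ)
    (hA : ∀ i : Fin m, A i = 2 * (lam i : ℝ) *
        ∏ j ∈ Finset.univ.erase i,
          (((lam i : ℝ) - (lam j : ℝ) - 1) * ((lam i : ℝ) + (lam j : ℝ))) /
            (((lam i : ℝ) - (lam j : ℝ)) * ((lam i : ℝ) + (lam j : ℝ) - 1)))
    (x : ℝ) (hx1 : ∀ i : Fin m, x ≠ (lam i : ℝ)) (hx2 : ∀ i : Fin m, x ≠ 1 - (lam i : ℝ)) :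
    (x ^ 2 - x) * ∏ i : Fin m,
        ((x - (lam i : ℝ) - 1) * (x + (lam i : ℝ))) /
          ((x - (lam i : ℝ)) * (x + (lam i : ℝ) - 1))
      = (x ^ 2 - x) - ∑ i : Fin m, A i -
          ∑ i : Fin m, A i * (lam i : ℝ) * ((lam i : ℝ) - 1) /
            ((x - (lam i : ℝ)) * (x + (lam i : ℝ) - 1)) := by
  classical
  set t : ℝ := x ^ 2 - x with ht
  set μ : Fin m → ℝ := fun i => (lam i : ℝ) * ((lam i : ℝ) - 1) with hμdef
  set ν : Fin m → ℝ := fun i => (lam i : ℝ) * ((lam i : ℝ) + 1) with hνdef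
  -- distinctness of lam
  have hlamne : ∀ i j : Fin m, i ≠ j → lam i ≠ lam j := by
    intro i j hij
    rcases lt_or_gt_of_ne hij with h | h
    · exact (hdec i j h).ne'
    · exact (hdec j i h).ne
  have hμinj : Function.Injective μ := by
    intro i j hij
    by_contra hne
    have h1 : (1:ℤ) ≤ lam i := hpos i
    have h2 : (1:ℤ) ≤ lam j := hpos j
    have h3 : lam i ≠ lam j := hlamne i j hne
    have : (lam i : ℝ) * ((lam i : ℝ) - 1) = (lam j : ℝ) * ((lam j : ℝ) - 1) := hij
    have hz : lam i * (lam i - 1) = lam j * (lam j - 1) := by exact_mod_cast this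
    have : (lam i - lam j) * (lam i + lam j - 1) = 0 := by ring_nf; linarith [hz]
    rcases mul_eq_zero.mp this with h | h
    · exact h3 (by linarith)
    · omega
  -- nonvanishing of t - μ i
  have hdμ : ∀ i : Fin m, t - μ i = (x - (lam i : ℝ)) * (x + (lam i : ℝ) - 1) := by
    intro i; simp only [ht, hμdef]; ring
  have hdμne : ∀ i : Fin m, t - μ i ≠ 0 := by
    intro i
    rw [hdμ i]
    refine mul_ne_zero (sub_ne_zero.mpr (hx1 i)) ?_
    intro h
    exact hx2 i (by linarith [sub_eq_zero.mp h])
  have hdν : ∀ i : Fin m, t - ν i = (x - (lam i : ℝ) - 1) * (x + (lam i : ℝ)) := by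
    intro i; simp only [ht, hνdef]; ring
  -- erase product denominators nonzero
  have hDne : ∀ i : Fin m, (∏ j ∈ Finset.univ.erase i, (μ i - μ j)) ≠ 0 := by
    intro i
    refine Finset.prod_ne_zero_iff.mpr fun j hj => ?_
    have : i ≠ j := fun h => (Finset.mem_erase.mp hj).1 h.symm
    exact sub_ne_zero.mpr fun h => this (hμinj h)
  -- A i in terms of μ, ν
  have hAc : ∀ i : Fin m, A i * ∏ j ∈ Finset.univ.erase i, (μ i - μ j)
      = - ∏ j : Fin m, (μ i - ν j) := by
    intro i
    have hprod : ∏ j : Fin m, (μ i - ν j)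
        = (μ i - ν i) * ∏ j ∈ Finset.univ.erase i, (μ i - ν j) :=
      (Finset.mul_prod_erase _ _ (Finset.mem_univ i)).symm
    have hμν : ∀ j : Fin m, μ i - ν j
        = ((lam i : ℝ) - (lam j : ℝ) - 1) * ((lam i : ℝ) + (lam j : ℝ)) := by
      intro j; simp only [hμdef, hνdef]; ring
    have hμμ : ∀ j : Fin m, μ i - μ j
        = ((lam i : ℝ) - (lam j : ℝ)) * ((lam i : ℝ) + (lam j : ℝ) - 1) := by
      intro j; simp only [hμdef]; ring
    have hself : μ i - ν i = -(2 * (lam i : ℝ)) := by simp only [hμdef, hνdef]; ring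
    rw [hA i, hprod, hself]
    rw [Finset.prod_div_distrib]
    simp only [← hμν, ← hμμ]
    rw [mul_assoc, div_mul_cancel₀ _ (hDne i)]
    ring
  -- key identity
  have hkey := lagrange_key m μ ν hμinj t
  -- rewrite goal
  have hLHS : (x ^ 2 - x) * ∏ i : Fin m,
        ((x - (lam i : ℝ) - 1) * (x + (lam i : ℝ))) /
          ((x - (lam i : ℝ)) * (x + (lam i : ℝ) - 1))
      = t * ∏ i : Fin m, (t - ν i) / (t - μ i) := by
    rw [← ht]
    congr 1
    exact Finset.prod_congr rfl fun i _ => by rw [hdν i, hdμ i]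
  rw [hLHS]
  have hRHS : ∀ i : Fin m, A i * (lam i : ℝ) * ((lam i : ℝ) - 1) /
            ((x - (lam i : ℝ)) * (x + (lam i : ℝ) - 1)) = A i * μ i / (t - μ i) := by
    intro i; rw [hdμ i, hμdef]; ring_nf
  simp only [hRHS]
  rw [Finset.prod_div_distrib, hkey]
  have hPne : (∏ i : Fin m, (t - μ i)) ≠ 0 := Finset.prod_ne_zero_iff.mpr fun i _ => hdμne i
  rw [add_div, div_self hPne, mul_add, mul_one, Finset.sum_div, Finset.mul_sum]
  have hterm : ∀ i : Fin m,
      t * ((∏ j : Fin m, (μ i - ν j)) * (∏ j ∈ Finset.univ.erase i, ((μ i - μ j)⁻¹ * (t - μ j)))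
          / ∏ j : Fin m, (t - μ j))
        = -A i - A i * μ i / (t - μ i) := by
    intro i
    have hE : ∏ j : Fin m, (t - μ j) = (t - μ i) * ∏ j ∈ Finset.univ.erase i, (t - μ j) :=
      (Finset.mul_prod_erase _ _ (Finset.mem_univ i)).symm
    have hEne : (∏ j ∈ Finset.univ.erase i, (t - μ j)) ≠ 0 :=
      Finset.prod_ne_zero_iff.mpr fun j _ => hdμne j
    have hsplit : ∏ j ∈ Finset.univ.erase i, ((μ i - μ j)⁻¹ * (t - μ j))
        = (∏ j ∈ Finset.univ.erase i, (μ i - μ j))⁻¹ * ∏ j ∈ Finset.univ.erase i, (t - μ j) := by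
      rw [Finset.prod_mul_distrib, ← Finset.prod_inv_distrib]
    rw [hsplit, hE]
    have hc := hAc i
    set c := ∏ j : Fin m, (μ i - ν j)
    set D := ∏ j ∈ Finset.univ.erase i, (μ i - μ j)
    set E := ∏ j ∈ Finset.univ.erase i, (t - μ j)
    have h1 := hdμne i
    have h2 : D ≠ 0 := hDne i
    rw [show c = -(A i * D) by linarith]
    field_simp
    ring
  rw [Finset.sum_congr rfl fun i _ => hterm i, Finset.sum_sub_distrib]
  simp only [Finset.sum_neg_distrib]
  ring
end

section
/- Let V be a finite-dimensional real inner product space, R ⊂ V∖{0} a finite reduced crystallographic root system spanning V, R⁺ a positive system for R, c : R → ℝ a Weyl-group–invariant function, and C(V) the Clifford algebra of V with relations v·w + w·v = −2⟨v,w⟩; set f_α = α/|α| ∈ C(V) for α ∈ R. Define the Casimir element Ω_c = ∑_{(α,β) ∈ R⁺×R⁺, s_α(β) ∈ −R⁺} c(α)c(β) |α̌||β̌| f_α f_β ∈ C(V). Then Ω_c commutes with f_γ for every γ ∈ R; equivalently, Ω_c lies in the center of the group algebra of the subgroup of the unit group of C(V) generated by {f_α : α ∈ R} (the spin double cover W̃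 of the Weyl group). -/
open Finset RealInnerProductSpace

set_option maxHeartbeats 1000000

/-- The Casimir element `Ω_{W̃,c} = ∑_{α,β>0, s_α(β)<0} c(α)c(β)|α̌||β̌| f_α f_β` of the
Clifford algebra commutes with each generator `f_γ = ι(γ/|γ|)`, `γ ∈ R`, of the spin cover
`W̃` of the Weyl group; i.e. it is central in `ℂ[W̃]`. -/
theorem stmt_3
    (V : Type*) [NormedAddCommGroup V] [InnerProductSpace ℝ V] [FiniteDimensional ℝ V]
    [DecidableEq V]
    -- the root system
    (R : Finset V) (hR0 : (0 : V) ∉ R)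
    (hspan : Submodule.span ℝ (R : Set V) = ⊤)
    -- the reflections
    (s : V → V → V)
    (hs : ∀ α v : V, s α v = v - (2 * ⟪v, α⟫ / ⟪α, α⟫) • α)
    (hsR : ∀ α ∈ R, ∀ β ∈ R, s α β ∈ R)
    -- crystallographic
    (hcrys : ∀ α ∈ R, ∀ β ∈ R, ∃ n : ℤ, 2 * ⟪β, α⟫ / ⟪α, α⟫ = (n : ℝ))
    -- reduced
    (hred : ∀ α ∈ R, ∀ t : ℝ, t • α ∈ R → t = 1 ∨ t = -1)
    -- a positive system
    (Rp : Finset V) (t : V) (ht : ∀ α ∈ R, ⟪t, α⟫ ≠ 0)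
    (hRp : Rp = R.filter fun α => 0 < ⟪t, α⟫)
    -- a Weyl-group invariant parameter function
    (c : V → ℝ) (hc : ∀ α ∈ R, ∀ β ∈ R, c (s α β) = c β)
    -- the coroots
    (cv : V → V) (hcv : ∀ α : V, cv α = (2 / ⟪α, α⟫) • α)
    -- the Clifford algebra of (V, -⟨·,·⟩) and the elements f_α = α/|α|
    (Q : QuadraticForm ℝ V) (hQ : ∀ v : V, Q v = -⟪v, v⟫)
    (f : V → CliffordAlgebra Q) (hf : ∀ α : V, f α = CliffordAlgebra.ι Q (‖α‖⁻¹ • α))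
    -- the Casimir element
    (Ω : CliffordAlgebra Q)
    (hΩ : Ω = ∑ p ∈ (Rp ×ˢ Rp).filter (fun p => -(s p.1 p.2) ∈ Rp),
        (c p.1 * c p.2 * (‖cv p.1‖ * ‖cv p.2‖)) • (f p.1 * f p.2)) :
    ∀ γ ∈ R, Ω * f γ = f γ * Ω := by
  intro γ hγR
  -- basic facts about roots
  have hRpR : Rp ⊆ R := by rw [hRp]; exact Finset.filter_subset _ _
  have hne : ∀ x ∈ R, x ≠ (0 : V) := fun x hx h0 => hR0 (h0 ▸ hx)
  have hnp : ∀ x ∈ R, (0 : ℝ) < ‖x‖ := fun x hx => norm_pos_iff.mpr (hne x hx)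
  have hip : ∀ x ∈ R, (0 : ℝ) < ⟪x, x⟫ := fun x hx => by
    rw [real_inner_self_eq_norm_mul_norm]; exact mul_pos (hnp x hx) (hnp x hx)
  have hGn : ‖γ‖ ≠ 0 := ne_of_gt (hnp γ hγR)
  -- polar form of Q
  have hpolar : ∀ a b : V, QuadraticMap.polar Q a b = -(2 * ⟪a, b⟫) := by
    intro a b
    rw [QuadraticMap.polar, hQ, hQ, hQ, real_inner_add_add_self]
    ring
  -- the basic Clifford commutator computation
  have key : ∀ a b g : V,
      CliffordAlgebra.ι Q a * CliffordAlgebra.ι Q b * CliffordAlgebra.ι Q g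
        - CliffordAlgebra.ι Q g * (CliffordAlgebra.ι Q a * CliffordAlgebra.ι Q b)
      = CliffordAlgebra.ι Q
          (QuadraticMap.polar Q b g • a - QuadraticMap.polar Q a g • b) := by
    intro a b g
    rw [map_sub, map_smul, map_smul, Algebra.smul_def, Algebra.smul_def,
      mul_assoc, CliffordAlgebra.ι_mul_ι_comm b g, mul_sub, ← mul_assoc,
      CliffordAlgebra.ι_mul_ι_comm a g, sub_mul]
    simp only [Algebra.commutes]
    noncomm_ring
  -- abbreviations
  set S : Finset (V × V) := (Rp ×ˢ Rp).filter (fun p => -(s p.1 p.2) ∈ Rp) with hS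
  set u : V → V := fun x => ‖x‖⁻¹ • x with hu
  set F : V × V → V := fun p =>
    (c p.1 * c p.2 * (‖cv p.1‖ * ‖cv p.2‖)) •
      (QuadraticMap.polar Q (u p.2) (u γ) • u p.1
        - QuadraticMap.polar Q (u p.1) (u γ) • u p.2) with hF
  -- the commutator equals ι of a vector
  have hcomm : Ω * f γ - f γ * Ω = CliffordAlgebra.ι Q (∑ p ∈ S, F p) := by
    rw [hΩ, Finset.sum_mul, Finset.mul_sum, ← Finset.sum_sub_distrib, map_sum]
    refine Finset.sum_congr rfl fun p hp => ?_
    rw [hF, map_smul, smul_mul_assoc, mul_smul_comm, ← smul_sub, hf, hf, hf, key]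
  -- reflections square to the identity (in the needed negated form)
  have hss : ∀ α ∈ R, ∀ β : V, -(s α (-(s α β))) = β := by
    intro α hα β
    have hαα : ⟪α, α⟫ ≠ 0 := ne_of_gt (hip _ hα)
    rw [hs, hs]
    simp only [inner_neg_left, inner_sub_left, real_inner_smul_left]
    match_scalars <;> field_simp <;> ring
  -- the vector sum vanishes, via the involution (α, β) ↦ (α, -s α β)
  have hzero : ∑ p ∈ S, F p = 0 := by
    have g_mem : ∀ p ∈ S, ((p.1, -(s p.1 p.2)) : V × V) ∈ S := by
      intro p hp
      rw [hS, Finset.mem_filter, Finset.mem_product] at hp ⊢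
      obtain ⟨⟨h1, h2⟩, h3⟩ := hp
      exact ⟨⟨h1, h3⟩, by rw [hss p.1 (hRpR h1) p.2]; exact h2⟩
    refine Finset.sum_involution (fun p _ => (p.1, -(s p.1 p.2))) ?_ ?_ g_mem ?_
    · -- cancellation of paired terms
      rintro ⟨α, β⟩ hp
      rw [hS, Finset.mem_filter, Finset.mem_product] at hp
      obtain ⟨⟨h1, h2⟩, h3⟩ := hp
      have hα : α ∈ R := hRpR h1
      have hβ : β ∈ R := hRpR h2
      have hαα : ⟪α, α⟫ ≠ 0 := ne_of_gt (hip _ hα)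
      have hββ : ⟪β, β⟫ ≠ 0 := ne_of_gt (hip _ hβ)
      have hA : ‖α‖ ≠ 0 := ne_of_gt (hnp _ hα)
      have hB : ‖β‖ ≠ 0 := ne_of_gt (hnp _ hβ)
      have hβ'eq : -(s α β) = (2 * ⟪β, α⟫ / ⟪α, α⟫) • α - β := by
        rw [hs, neg_sub]
      -- inner products are preserved
      have hib' : ⟪-(s α β), -(s α β)⟫ = ⟪β, β⟫ := by
        rw [hβ'eq]
        simp only [inner_sub_left, inner_sub_right, real_inner_smul_left,
          real_inner_smul_right]
        rw [real_inner_comm β α]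
        field_simp
        ring
      have hnb' : ‖-(s α β)‖ = ‖β‖ := by
        have h := congrArg Real.sqrt hib'
        rwa [real_inner_self_eq_norm_mul_norm, real_inner_self_eq_norm_mul_norm,
          Real.sqrt_mul_self (norm_nonneg _), Real.sqrt_mul_self (norm_nonneg _)] at h
      -- c is preserved
      have hnegβ : (-β : V) = s β β := by
        rw [hs, mul_div_assoc, div_self hββ, mul_one]
        module
      have hmβR : -β ∈ R := by rw [hnegβ]; exact hsR β hβ β hβ
      have hcβ' : c (-(s α β)) = c β := by
        have h1 : -(s α β) = s α (-β) := by
          rw [hβ'eq, hs, inner_neg_left]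
          module
        rw [h1, hc α hα (-β) hmβR, hnegβ, hc β hβ β hβ]
      -- coroot norm is preserved
      have hcvβ' : ‖cv (-(s α β))‖ = ‖cv β‖ := by
        rw [hcv, hcv, norm_smul, norm_smul, hib', hnb']
      -- now the cancellation
      simp only [hF, hu]
      rw [hcβ', hcvβ', hnb', hβ'eq]
      simp only [hpolar, inner_sub_left, real_inner_smul_left, real_inner_smul_right,
        smul_sub, smul_smul]
      match_scalars <;> field_simp <;> ring
    · -- terms not cancelled by themselves are fixed-point-free
      rintro ⟨α, β⟩ hp hFp hfix
      rw [hS, Finset.mem_filter, Finset.mem_product] at hp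
      obtain ⟨⟨h1, h2⟩, h3⟩ := hp
      apply hFp
      have heq2 : -(s α β) = β := congrArg Prod.snd hfix
      have hα : α ∈ R := hRpR h1
      have hβ : β ∈ R := hRpR h2
      have hαα : ⟪α, α⟫ ≠ 0 := ne_of_gt (hip _ hα)
      -- from the fixed point equation, β is a positive multiple of α
      set k : ℝ := 2 * ⟪β, α⟫ / ⟪α, α⟫ with hkdef
      have hk : k • α = (2 : ℝ) • β := by
        rw [hs, neg_sub, sub_eq_iff_eq_add] at heq2
        rw [hkdef, heq2]; module
      have hβeq : β = (2⁻¹ * k) • α := by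
        have h := congrArg (fun v : V => (2⁻¹ : ℝ) • v) hk
        simp only [smul_smul] at h
        norm_num at h
        rw [← h]
        norm_num
      have htα : 0 < ⟪t, α⟫ := by
        rw [hRp, Finset.mem_filter] at h1; exact h1.2
      have htβ : 0 < ⟪t, β⟫ := by
        rw [hRp, Finset.mem_filter] at h2; exact h2.2
      have hkpos : 0 < 2⁻¹ * k := by
        by_contra hneg
        push_neg at hneg
        rw [hβeq, real_inner_smul_right] at htβ
        nlinarith
      -- hence the unit vectors agree
      have hA : ‖α‖ ≠ 0 := ne_of_gt (hnp _ hα)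
      have huu : ‖β‖⁻¹ • β = ‖α‖⁻¹ • α := by
        have hkne : k ≠ 0 := by intro h0; rw [h0] at hkpos; norm_num at hkpos
        rw [hβeq, norm_smul, Real.norm_eq_abs, abs_of_pos hkpos, smul_smul]
        match_scalars
        field_simp
      simp only [hF, hu, huu, sub_self, smul_zero]
    · -- involution property
      rintro ⟨α, β⟩ hp
      rw [hS, Finset.mem_filter, Finset.mem_product] at hp
      obtain ⟨⟨h1, h2⟩, h3⟩ := hp
      simp [hss α (hRpR h1) β]
  rw [hzero, map_zero] at hcomm
  exact sub_eq_zero.mp hcomm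
end
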